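/- arXiv:1402.3748 — 2 statements merged into one kernel-verified Lean document; each statement's English description precedes it below -/
import Mathlib

section
/- The least trimmed squares estimator is the least squares estimator on the best subsample: Fix n, y ∈ ℝⁿ, and an n×p matrix X such that X_{[𝒜]} has full column rank for every 𝒜 ⊆ {1,…,n} with |𝒜| = m. Let β̂_LTS be any minimizer over β ∈ ℝ^p of Σ_{i=1}^m r²_{π_i(β)}(β) (the sum of the m smallest squared residuals), and let 𝒜*_n be a minimizer of ψ_n(𝒜) over 𝒜 ⊆ {1,…,n} with |𝒜| = m. Then β̂_LTS = β̂_{[J(β̂_LTS)]}, the trimmed objective value of β̂_LTS equals ψ_n(𝒜*_n), i.e., Σ_{i=1}^m r²_{π_i(β̂_LTS)}(β̂_LTS) = ψ_n(𝒜*_n) = min_β Σ_{i=1}^m r²_{π_i(β)}(β), and J(β̂_LTS) attains this minimum of ψ_n; in particular β̂_{[𝒜*_n]} is also a least trimmed squares estimator. -/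
open Filter Topology

/-- The trimmed sum of squares: the sum of the `m` smallest squared residuals of `β`,
realized as the minimum of `∑_{i ∈ 𝒜} r_i(β)²` over subsets `𝒜` of size `m`. -/
noncomputable def trimmedSS {n p : ℕ} (x : Fin n → Fin p → ℝ) (y : Fin n → ℝ) (m : ℕ)
    (β : Fin p → ℝ) : ℝ :=
  sInf ((fun 𝒜 : Finset (Fin n) => ∑ i ∈ 𝒜, (y i - ∑ j, x i j * β j) ^ 2) ''
    {𝒜 | 𝒜.card = m})


lemma sum_smallest_le' {ι : Type*} [DecidableEq ι] (f : ι → ℝ) (J 𝒜 : Finset ι)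
    (hcard : J.card = 𝒜.card)
    (h : ∀ i ∈ J, ∀ k ∉ J, f i ≤ f k) :
    ∑ i ∈ J, f i ≤ ∑ i ∈ 𝒜, f i := by
  have h1 : ∑ i ∈ J ∩ 𝒜, f i + ∑ i ∈ J \ 𝒜, f i = ∑ i ∈ J, f i :=
    Finset.sum_inter_add_sum_sdiff J 𝒜 f
  have h2 : ∑ i ∈ 𝒜 ∩ J, f i + ∑ i ∈ 𝒜 \ J, f i = ∑ i ∈ 𝒜, f i :=
    Finset.sum_inter_add_sum_sdiff 𝒜 J f
  have hic : 𝒜 ∩ J = J ∩ 𝒜 := Finset.inter_comm _ _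
  have hc1 : (J \ 𝒜).card + (J ∩ 𝒜).card = J.card := Finset.card_sdiff_add_card_inter J 𝒜
  have hc2 : (𝒜 \ J).card + (𝒜 ∩ J).card = 𝒜.card := Finset.card_sdiff_add_card_inter 𝒜 J
  have hcc : (J \ 𝒜).card = (𝒜 \ J).card := by rw [hic] at hc2; omega
  have key : ∑ i ∈ J \ 𝒜, f i ≤ ∑ i ∈ 𝒜 \ J, f i := by
    rcases (𝒜 \ J).eq_empty_or_nonempty with he | hne
    · have : J \ 𝒜 = ∅ := Finset.card_eq_zero.mp (by rw [hcc, he]; simp)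
      simp [this, he]
    · obtain ⟨k₀, hk₀mem, hk₀min⟩ := Finset.exists_min_image (𝒜 \ J) f hne
      have hk₀J : k₀ ∉ J := (Finset.mem_sdiff.mp hk₀mem).2
      calc ∑ i ∈ J \ 𝒜, f i ≤ (J \ 𝒜).card • f k₀ :=
            Finset.sum_le_card_nsmul _ _ _ (fun i hi =>
              h i (Finset.mem_sdiff.mp hi).1 k₀ hk₀J)
        _ = (𝒜 \ J).card • f k₀ := by rw [hcc]
        _ ≤ ∑ i ∈ 𝒜 \ J, f i := Finset.card_nsmul_le_sum _ _ _ hk₀min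
  rw [hic] at h2
  linarith

lemma ls_min_unique' {n p : ℕ} (x : Fin n → Fin p → ℝ) (y : Fin n → ℝ)
    (𝒜 : Finset (Fin n))
    (hrank : ∀ b : Fin p → ℝ, (∀ i ∈ 𝒜, ∑ j, x i j * b j = 0) → b = 0)
    (β : Fin p → ℝ)
    (hβ : ∀ b : Fin p → ℝ, ∑ i ∈ 𝒜, (y i - ∑ j, x i j * β j) ^ 2 ≤
      ∑ i ∈ 𝒜, (y i - ∑ j, x i j * b j) ^ 2)
    (b : Fin p → ℝ)
    (hb : ∑ i ∈ 𝒜, (y i - ∑ j, x i j * b j) ^ 2 ≤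
      ∑ i ∈ 𝒜, (y i - ∑ j, x i j * β j) ^ 2) :
    b = β := by
  set d : Fin p → ℝ := fun j => b j - β j with hd
  set A : ℝ := ∑ i ∈ 𝒜, (y i - ∑ j, x i j * β j) * (∑ j, x i j * d j) with hA
  set B : ℝ := ∑ i ∈ 𝒜, (∑ j, x i j * d j) ^ 2 with hB
  have key : ∀ t : ℝ, ∑ i ∈ 𝒜, (y i - ∑ j, x i j * (β j + t * d j)) ^ 2
      = (∑ i ∈ 𝒜, (y i - ∑ j, x i j * β j) ^ 2) - 2 * t * A + t ^ 2 * B := by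
    intro t
    have step : ∀ i, (y i - ∑ j, x i j * (β j + t * d j)) ^ 2
        = (y i - ∑ j, x i j * β j) ^ 2
          - 2 * t * ((y i - ∑ j, x i j * β j) * (∑ j, x i j * d j))
          + t ^ 2 * (∑ j, x i j * d j) ^ 2 := by
      intro i
      have : ∑ j, x i j * (β j + t * d j)
          = (∑ j, x i j * β j) + t * (∑ j, x i j * d j) := by
        rw [Finset.mul_sum, ← Finset.sum_add_distrib]
        exact Finset.sum_congr rfl (fun j _ => by ring)
      rw [this]; ring
    calc ∑ i ∈ 𝒜, (y i - ∑ j, x i j * (β j + t * d j)) ^ 2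
        = ∑ i ∈ 𝒜, ((y i - ∑ j, x i j * β j) ^ 2
          - 2 * t * ((y i - ∑ j, x i j * β j) * (∑ j, x i j * d j))
          + t ^ 2 * (∑ j, x i j * d j) ^ 2) :=
          Finset.sum_congr rfl (fun i _ => step i)
      _ = (∑ i ∈ 𝒜, (y i - ∑ j, x i j * β j) ^ 2) - 2 * t * A + t ^ 2 * B := by
          rw [Finset.sum_add_distrib, Finset.sum_sub_distrib, hA, hB,
            Finset.mul_sum, Finset.mul_sum]
  have hB0 : 0 ≤ B := Finset.sum_nonneg (fun i _ => sq_nonneg _)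
  have hA0 : A = 0 := by
    set t : ℝ := A / (B + 1) with htdef
    have hBpos : (0:ℝ) < B + 1 := by linarith
    have ht : t * (B + 1) = A := div_mul_cancel₀ A (ne_of_gt hBpos)
    have h1 := hβ (fun j => β j + t * d j)
    rw [key t] at h1
    have h2 : 0 ≤ -2 * t * A + t ^ 2 * B := by linarith
    have hA' : A = t * B + t := by linarith [ht]
    rw [hA'] at h2
    have h3 : t ^ 2 * (B + 2) ≤ 0 := by nlinarith [h2]
    have ht2 : t ^ 2 ≤ 0 := by nlinarith [h3, hB0, sq_nonneg t]
    have ht0 : t = 0 := pow_eq_zero_iff two_ne_zero |>.mp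
      (le_antisymm ht2 (sq_nonneg t))
    rw [hA', ht0]; ring
  have hsum1 : ∀ i, ∑ j, x i j * (β j + 1 * d j) = ∑ j, x i j * b j := by
    intro i
    exact Finset.sum_congr rfl (fun j _ => by simp only [hd]; ring)
  have key1 : ∑ i ∈ 𝒜, (y i - ∑ j, x i j * b j) ^ 2
      = (∑ i ∈ 𝒜, (y i - ∑ j, x i j * β j) ^ 2) - 2 * 1 * A + 1 ^ 2 * B := by
    rw [← key 1]; simp only [hsum1]
  rw [key1, hA0] at hb
  have hB00 : B = 0 := le_antisymm (by linarith) hB0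
  have hsum0 : ∑ i ∈ 𝒜, (∑ j, x i j * d j) ^ 2 = 0 := by rw [← hB]; exact hB00
  have hz := (Finset.sum_eq_zero_iff_of_nonneg
    (fun i _ => sq_nonneg (∑ j, x i j * d j))).mp hsum0
  have hd0 : d = 0 := hrank d (fun i hi =>
    pow_eq_zero_iff two_ne_zero |>.mp (hz i hi))
  funext j
  have hj : b j - β j = 0 := by
    have := congrFun hd0 j
    simpa [hd] using this
  linarith

/-- The least trimmed squares estimator is the least squares estimator on the best
subsample: if every `m`-row submatrix of `X` has full column rank, `β̂` assigns to each
`m`-subset `𝒜` the least squares estimator on `𝒜`, `βLTS` minimizes the trimmed sum of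
squares, `𝒜*` minimizes `ψ(𝒜) = ∑_{i∈𝒜} (y_i - x_i'β̂_[𝒜])²` over `m`-subsets, and `J`
is an index set of `m` smallest squared residuals of `βLTS`, then `βLTS = β̂_[J]`, the
trimmed objective value of `βLTS` equals `ψ(𝒜*)`, `J` also attains the minimum of `ψ`,
and `β̂_[𝒜*]` is again a least trimmed squares estimator. -/
theorem lts_is_best_subsample_ls {n p m : ℕ} (hm : m ≤ n)
    (x : Fin n → Fin p → ℝ) (y : Fin n → ℝ)
    (hrank : ∀ 𝒜 : Finset (Fin n), 𝒜.card = m →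
      ∀ b : Fin p → ℝ, (∀ i ∈ 𝒜, ∑ j, x i j * b j = 0) → b = 0)
    (betaHat : Finset (Fin n) → (Fin p → ℝ))
    (hbetaHat : ∀ 𝒜 : Finset (Fin n), 𝒜.card = m → ∀ b : Fin p → ℝ,
      ∑ i ∈ 𝒜, (y i - ∑ j, x i j * betaHat 𝒜 j) ^ 2 ≤
        ∑ i ∈ 𝒜, (y i - ∑ j, x i j * b j) ^ 2)
    (βLTS : Fin p → ℝ)
    (hLTS : ∀ b : Fin p → ℝ, trimmedSS x y m βLTS ≤ trimmedSS x y m b)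
    (Astar : Finset (Fin n)) (hAcard : Astar.card = m)
    (hAmin : ∀ 𝒜 : Finset (Fin n), 𝒜.card = m →
      ∑ i ∈ Astar, (y i - ∑ j, x i j * betaHat Astar j) ^ 2 ≤
        ∑ i ∈ 𝒜, (y i - ∑ j, x i j * betaHat 𝒜 j) ^ 2)
    (J : Finset (Fin n)) (hJcard : J.card = m)
    (hJ : ∀ i ∈ J, ∀ k ∉ J,
      (y i - ∑ j, x i j * βLTS j) ^ 2 ≤ (y k - ∑ j, x k j * βLTS j) ^ 2) :
    βLTS = betaHat J ∧
    trimmedSS x y m βLTS = ∑ i ∈ Astar, (y i - ∑ j, x i j * betaHat Astar j) ^ 2 ∧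
    ∑ i ∈ J, (y i - ∑ j, x i j * betaHat J j) ^ 2 =
      ∑ i ∈ Astar, (y i - ∑ j, x i j * betaHat Astar j) ^ 2 ∧
    ∀ b : Fin p → ℝ, trimmedSS x y m (betaHat Astar) ≤ trimmedSS x y m b := by
  -- basic facts about the sets appearing in trimmedSS
  have hbdd : ∀ β : Fin p → ℝ, BddBelow
      ((fun 𝒜 : Finset (Fin n) => ∑ i ∈ 𝒜, (y i - ∑ j, x i j * β j) ^ 2) ''
        {𝒜 | 𝒜.card = m}) := by
    intro β
    refine ⟨0, ?_⟩
    rintro v ⟨𝒜, -, rfl⟩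
    exact Finset.sum_nonneg (fun i _ => sq_nonneg _)
  obtain ⟨𝒜₀, -, h𝒜₀⟩ := Finset.exists_subset_card_eq (s := (Finset.univ : Finset (Fin n))) (n := m)
    (by simpa using hm)
  have hne : ∀ β : Fin p → ℝ,
      ((fun 𝒜 : Finset (Fin n) => ∑ i ∈ 𝒜, (y i - ∑ j, x i j * β j) ^ 2) ''
        {𝒜 | 𝒜.card = m}).Nonempty := fun β => ⟨_, ⟨𝒜₀, h𝒜₀, rfl⟩⟩
  have hle : ∀ (β : Fin p → ℝ) (𝒜 : Finset (Fin n)), 𝒜.card = m →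
      trimmedSS x y m β ≤ ∑ i ∈ 𝒜, (y i - ∑ j, x i j * β j) ^ 2 := by
    intro β 𝒜 h𝒜
    exact csInf_le (hbdd β) ⟨𝒜, h𝒜, rfl⟩
  -- trimmedSS of βLTS equals the sum over J
  have htJ : trimmedSS x y m βLTS = ∑ i ∈ J, (y i - ∑ j, x i j * βLTS j) ^ 2 := by
    refine le_antisymm (hle βLTS J hJcard) ?_
    refine le_csInf (hne βLTS) ?_
    rintro v ⟨𝒜, h𝒜, rfl⟩
    exact sum_smallest_le' _ J 𝒜 (by rw [hJcard, h𝒜]) hJ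
  -- chain of inequalities
  have e1 : ∑ i ∈ J, (y i - ∑ j, x i j * betaHat J j) ^ 2 ≤
      ∑ i ∈ J, (y i - ∑ j, x i j * βLTS j) ^ 2 := hbetaHat J hJcard βLTS
  have e2 : ∑ i ∈ Astar, (y i - ∑ j, x i j * betaHat Astar j) ^ 2 ≤
      ∑ i ∈ J, (y i - ∑ j, x i j * betaHat J j) ^ 2 := hAmin J hJcard
  have e3 : trimmedSS x y m (betaHat Astar) ≤
      ∑ i ∈ Astar, (y i - ∑ j, x i j * betaHat Astar j) ^ 2 := hle _ Astar hAcard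
  have e4 : trimmedSS x y m βLTS ≤ trimmedSS x y m (betaHat Astar) := hLTS _
  -- all quantities are equal
  have eq1 : trimmedSS x y m βLTS =
      ∑ i ∈ Astar, (y i - ∑ j, x i j * betaHat Astar j) ^ 2 := by linarith
  have eq2 : ∑ i ∈ J, (y i - ∑ j, x i j * betaHat J j) ^ 2 =
      ∑ i ∈ Astar, (y i - ∑ j, x i j * betaHat Astar j) ^ 2 := by linarith
  have hbJ : βLTS = betaHat J := by
    refine ls_min_unique' x y J (hrank J hJcard) (betaHat J) (hbetaHat J hJcard)
      βLTS ?_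
    linarith
  refine ⟨hbJ, eq1, eq2, ?_⟩
  intro b
  have : trimmedSS x y m (betaHat Astar) = trimmedSS x y m βLTS := by linarith
  rw [this]; exact hLTS b
end

section
/- Almost sure concentration of chi-square sequences: Let ξ₁, ξ₂, … be random variables on a common probability space such that each ξ_n has the chi-square distribution with r_n degrees of freedom, where r_n is a positive integer (no independence assumed). Let {b_n} be a sequence of positive numbers such that r_n/b_n → α for some α ∈ [0,1] and Σ_{n=1}^∞ exp(−ϵ b_n) < ∞ for every ϵ > 0. Then (ξ_n − r_n)/b_n → 0 almost surely as n → ∞. -/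
open MeasureTheory ProbabilityTheory Filter Topology

section ChiSqAux
open Real

lemma gamma_lintegral_exp {a R t : ℝ} (ha : 0 < a) (hR : 0 < R) (ht : t < R) :
    ∫⁻ x, ENNReal.ofReal (Real.exp (t * x)) ∂(gammaMeasure a R)
      = ENNReal.ofReal ((R / (R - t)) ^ a) := by
  have hRt : 0 < R - t := by linarith
  have hmeas : Measurable fun x : ℝ => ENNReal.ofReal (Real.exp (t * x)) :=
    ((measurable_id.const_mul t).exp).ennreal_ofReal
  have hpdf : Measurable (gammaPDF a R) := (measurable_gammaPDFReal a R).ennreal_ofReal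
  rw [gammaMeasure, lintegral_withDensity_eq_lintegral_mul _ hpdf hmeas]
  have hpt : ∀ x : ℝ, (gammaPDF a R * fun x => ENNReal.ofReal (Real.exp (t * x))) x
      = ENNReal.ofReal ((R / (R - t)) ^ a) * gammaPDF a (R - t) x := by
    intro x
    rcases le_or_gt 0 x with hx | hx
    · simp only [Pi.mul_apply, gammaPDF_of_nonneg hx]
      rw [← ENNReal.ofReal_mul (by positivity), ← ENNReal.ofReal_mul (by positivity)]
      congr 1
      have h1 : Real.exp (-(R * x)) * Real.exp (t * x) = Real.exp (-((R - t) * x)) := by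
        rw [← Real.exp_add]; ring_nf
      have h2 : (R / (R - t)) ^ a = R ^ a / (R - t) ^ a := Real.div_rpow hR.le hRt.le a
      have h3 : (R - t) ^ a ≠ 0 := (Real.rpow_pos_of_pos hRt a).ne'
      rw [h2, ← h1]
      field_simp
    · simp [Pi.mul_apply, gammaPDF_of_neg hx]
  rw [lintegral_congr hpt, lintegral_const_mul _ (show Measurable (gammaPDF a (R - t)) from (measurable_gammaPDFReal a (R - t)).ennreal_ofReal),
    lintegral_gammaPDF_eq_one ha hRt, mul_one]

lemma gamma_chernoff {a R t c : ℝ} (ha : 0 < a) (hR : 0 < R) (ht : t < R) :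
    gammaMeasure a R {x | 0 ≤ t * (x - c)}
      ≤ ENNReal.ofReal (Real.exp (-(t * c)) * (R / (R - t)) ^ a) := by
  have h1 : gammaMeasure a R {x | 0 ≤ t * (x - c)}
      ≤ ∫⁻ x, ENNReal.ofReal (Real.exp (t * (x - c))) ∂(gammaMeasure a R) := by
    have : gammaMeasure a R {x | 0 ≤ t * (x - c)}
        = ∫⁻ x in {x | 0 ≤ t * (x - c)}, 1 ∂(gammaMeasure a R) := by
      rw [setLIntegral_one]
    rw [this]
    refine le_trans (setLIntegral_mono' ?_ ?_) (setLIntegral_le_lintegral _ _)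
    · exact measurableSet_le measurable_const ((measurable_id.sub_const c).const_mul t)
    · intro x hx
      exact ENNReal.one_le_ofReal.mpr (Real.one_le_exp hx)
  refine h1.trans ?_
  have hpt : ∀ x : ℝ, ENNReal.ofReal (Real.exp (t * (x - c)))
      = ENNReal.ofReal (Real.exp (-(t * c))) * ENNReal.ofReal (Real.exp (t * x)) := by
    intro x
    rw [← ENNReal.ofReal_mul (Real.exp_nonneg _), ← Real.exp_add]
    ring_nf
  simp_rw [hpt]
  rw [lintegral_const_mul' _ _ ENNReal.ofReal_ne_top, gamma_lintegral_exp ha hR ht,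
    ← ENNReal.ofReal_mul (Real.exp_nonneg _)]

open Real

lemma neg_log_one_sub_le {u : ℝ} (h0 : 0 ≤ u) (h2 : u ≤ 1/2) :
    -Real.log (1 - u) ≤ u + 2 * u ^ 2 := by
  have hu : 0 < 1 - u := by linarith
  have := Real.one_sub_inv_le_log_of_pos hu
  have hinv : (1 - u)⁻¹ ≤ 1 + u + 2 * u ^ 2 := by
    rw [inv_le_iff_one_le_mul₀ hu]
    nlinarith
  nlinarith [this]

lemma log_one_add_ge {u : ℝ} (h0 : 0 ≤ u) : u - u ^ 2 ≤ Real.log (1 + u) := by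
  have hu : 0 < 1 + u := by linarith
  have := Real.one_sub_inv_le_log_of_pos hu
  have hinv : 1 - (1 + u)⁻¹ ≥ u - u ^ 2 := by
    have h1 : (1 + u)⁻¹ ≤ 1 - u + u ^ 2 := by
      rw [inv_le_iff_one_le_mul₀ hu]
      nlinarith
    linarith
  linarith

lemma upper_aux {ε bn rn t : ℝ} (hε : 0 < ε) (hb : 0 < bn) (hrn : 0 ≤ rn)
    (hr2b : rn ≤ 2 * bn) (ht0 : 0 < t) (ht16 : t ≤ ε / 16) (ht4 : t ≤ 4⁻¹) :
    Real.exp (-(t * (rn + ε * bn))) * ((1/2) / (1/2 - t)) ^ (rn / 2)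
      ≤ Real.exp (-(t * ε / 2) * bn) := by
  have h2t : 0 < 1 - 2 * t := by nlinarith
  have hx : (1/2 : ℝ) / (1/2 - t) = (1 - 2 * t)⁻¹ := by
    field_simp
    all_goals ring
  have hxpos : (0:ℝ) < (1/2) / (1/2 - t) := by rw [hx]; positivity
  rw [Real.rpow_def_of_pos hxpos, ← Real.exp_add, Real.exp_le_exp, hx, Real.log_inv]
  have hlog : -Real.log (1 - 2 * t) ≤ 2 * t + 2 * (2 * t) ^ 2 :=
    neg_log_one_sub_le (by linarith) (by linarith)
  have h1 : rn / 2 * -Real.log (1 - 2 * t) ≤ rn / 2 * (2 * t + 8 * t ^ 2) := by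
    refine mul_le_mul_of_nonneg_left ?_ (by linarith)
    nlinarith
  nlinarith [mul_le_mul_of_nonneg_left hr2b (sq_nonneg t),
    mul_nonneg (mul_nonneg ht0.le hb.le) (sub_nonneg.2 ht16)]

lemma lower_aux {ε bn rn s : ℝ} (hε : 0 < ε) (hb : 0 < bn) (hrn : 0 ≤ rn)
    (hr2b : rn ≤ 2 * bn) (hs0 : 0 < s) (hs8 : s ≤ ε / 8) :
    Real.exp (s * (rn - ε * bn)) * ((1/2) / (1/2 + s)) ^ (rn / 2)
      ≤ Real.exp (-(s * ε / 2) * bn) := by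
  have h2s : 0 < 1 + 2 * s := by linarith
  have hx : (1/2 : ℝ) / (1/2 + s) = (1 + 2 * s)⁻¹ := by
    field_simp
    all_goals ring
  have hxpos : (0:ℝ) < (1/2) / (1/2 + s) := by rw [hx]; positivity
  rw [Real.rpow_def_of_pos hxpos, ← Real.exp_add, Real.exp_le_exp, hx, Real.log_inv]
  have hlog : 2 * s - (2 * s) ^ 2 ≤ Real.log (1 + 2 * s) := log_one_add_ge (by linarith)
  have h1 : rn / 2 * -Real.log (1 + 2 * s) ≤ rn / 2 * (-(2 * s) + 4 * s ^ 2) := by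
    refine mul_le_mul_of_nonneg_left ?_ (by linarith)
    nlinarith
  nlinarith [mul_le_mul_of_nonneg_left hr2b (sq_nonneg s),
    mul_nonneg (mul_nonneg hs0.le hb.le) (sub_nonneg.2 hs8)]

end ChiSqAux

/-- Almost sure concentration of chi-square sequences: if `ξ n` has the chi-square
distribution with `r n` degrees of freedom (chi-square with `r` degrees of freedom is
the Gamma distribution with shape `r/2` and rate `1/2`), `r n / b n → α ∈ [0,1]`, and
`∑ exp (-ε * b n) < ∞` for every `ε > 0`, then `(ξ n - r n) / b n → 0` almost surely. -/
theorem chiSq_sub_dof_div_tendsto_zero_ae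
    {Ω : Type*} [MeasurableSpace Ω] (P : Measure Ω) [IsProbabilityMeasure P]
    (ξ : ℕ → Ω → ℝ) (r : ℕ → ℕ) (hr : ∀ n, 0 < r n)
    (hξ : ∀ n, Measure.map (ξ n) P = gammaMeasure ((r n : ℝ) / 2) (1 / 2))
    (b : ℕ → ℝ) (hbpos : ∀ n, 0 < b n) (α : ℝ) (hα0 : 0 ≤ α) (hα1 : α ≤ 1)
    (hrb : Tendsto (fun n => (r n : ℝ) / b n) atTop (𝓝 α))
    (hsum : ∀ ε > 0, Summable fun n => Real.exp (-ε * b n)) :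
    ∀ᵐ ω ∂P, Tendsto (fun n => (ξ n ω - r n) / b n) atTop (𝓝 0) := by
  have hacast : ∀ n, (0:ℝ) < (r n : ℝ) / 2 := fun n => by
    have : (0:ℝ) < r n := Nat.cast_pos.2 (hr n); linarith
  have haem : ∀ n, AEMeasurable (ξ n) P := by
    intro n
    by_contra h
    have h0 : Measure.map (ξ n) P = 0 := Measure.map_of_not_aemeasurable h
    have hprob : IsProbabilityMeasure (gammaMeasure ((r n : ℝ) / 2) (1/2)) :=
      isProbabilityMeasure_gammaMeasure (hacast n) (by norm_num)
    rw [hξ n] at h0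
    exact hprob.ne_zero _ h0
  obtain ⟨N, hN⟩ : ∃ N, ∀ n ≥ N, (r n : ℝ) ≤ 2 * b n := by
    have h2 : ∀ᶠ n in atTop, (r n : ℝ) / b n < 2 := hrb.eventually_lt_const (by linarith)
    refine (eventually_atTop.1 (h2.mono fun n h => ?_))
    exact le_of_lt ((div_lt_iff₀ (hbpos n)).1 h |>.trans_le (by ring_nf; exact le_refl _))
  have key : ∀ ε : ℝ, 0 < ε → ∀ᵐ ω ∂P, ∀ᶠ n in atTop, |(ξ n ω - r n) / b n| < ε := by
    intro ε hε
    set t := min (ε/16) 4⁻¹ with htdef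
    have ht0 : 0 < t := lt_min (by positivity) (by norm_num)
    have ht16 : t ≤ ε/16 := min_le_left _ _
    have ht4 : t ≤ 4⁻¹ := min_le_right _ _
    set s := ε/8 with hsdef
    have hs0 : 0 < s := by positivity
    set c0 := min (t * ε / 2) (s * ε / 2) with hc0def
    have hc0 : 0 < c0 := lt_min (by positivity) (by positivity)
    have hbound : ∀ n, N ≤ n →
        P {ω | ε ≤ |(ξ n ω - r n) / b n|} ≤ ENNReal.ofReal (2 * Real.exp (-c0 * b n)) := by
      intro n hn
      have hbn := hbpos n
      have hrn : (0:ℝ) ≤ (r n : ℝ) := Nat.cast_nonneg _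
      have hr2b := hN n hn
      have hSmeas : MeasurableSet {x : ℝ | ε ≤ |(x - (r n : ℝ)) / b n|} :=
        measurableSet_le measurable_const (((measurable_id.sub_const _).div_const _).abs)
      have hset : {ω | ε ≤ |(ξ n ω - r n) / b n|} = ξ n ⁻¹' {x | ε ≤ |(x - (r n : ℝ)) / b n|} :=
        rfl
      rw [hset, ← Measure.map_apply_of_aemeasurable (haem n) hSmeas, hξ n]
      have hsub : {x : ℝ | ε ≤ |(x - (r n : ℝ)) / b n|} ⊆
          {x | 0 ≤ t * (x - ((r n : ℝ) + ε * b n))} ∪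
          {x | 0 ≤ (-s) * (x - ((r n : ℝ) - ε * b n))} := by
        intro x hx
        rcases le_abs.1 (Set.mem_setOf_eq ▸ hx) with h | h
        · left
          have hx1 : (r n : ℝ) + ε * b n ≤ x := by
            rw [le_div_iff₀ hbn] at h; linarith
          show 0 ≤ t * (x - ((r n : ℝ) + ε * b n))
          exact mul_nonneg ht0.le (by linarith)
        · right
          have hx1 : x ≤ (r n : ℝ) - ε * b n := by
            rw [← neg_div, le_div_iff₀ hbn] at h; linarith
          show 0 ≤ -s * (x - ((r n : ℝ) - ε * b n))
          exact mul_nonneg_of_nonpos_of_nonpos (by linarith) (by linarith)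
      refine le_trans (measure_mono hsub) (le_trans (measure_union_le _ _) ?_)
      have hch1 := gamma_chernoff (t := t) (c := (r n : ℝ) + ε * b n) (hacast n)
        (by norm_num : (0:ℝ) < 1/2) (lt_of_le_of_lt ht4 (by norm_num))
      have hch2 := gamma_chernoff (t := -s) (c := (r n : ℝ) - ε * b n) (hacast n)
        (by norm_num : (0:ℝ) < 1/2) (by linarith)
      have hb1 : Real.exp (-(t * ((r n : ℝ) + ε * b n))) * ((1/2) / (1/2 - t)) ^ ((r n : ℝ) / 2)
          ≤ Real.exp (-(t * ε / 2) * b n) := upper_aux hε hbn hrn hr2b ht0 ht16 ht4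
      have hb2 : Real.exp (-(-s * ((r n : ℝ) - ε * b n))) * ((1/2) / (1/2 - -s)) ^ ((r n : ℝ) / 2)
          ≤ Real.exp (-(s * ε / 2) * b n) := by
        have := lower_aux hε hbn hrn hr2b hs0 (le_refl s)
        simpa [neg_neg, sub_neg_eq_add] using this
      have hone : Real.exp (-(t * ε / 2) * b n) ≤ Real.exp (-c0 * b n) := by
        apply Real.exp_le_exp.2
        have : c0 ≤ t * ε / 2 := min_le_left _ _
        nlinarith
      have htwo : Real.exp (-(s * ε / 2) * b n) ≤ Real.exp (-c0 * b n) := by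
        apply Real.exp_le_exp.2
        have : c0 ≤ s * ε / 2 := min_le_right _ _
        nlinarith
      calc gammaMeasure ((r n : ℝ)/2) (1/2) {x | 0 ≤ t * (x - ((r n : ℝ) + ε * b n))}
            + gammaMeasure ((r n : ℝ)/2) (1/2) {x | 0 ≤ (-s) * (x - ((r n : ℝ) - ε * b n))}
          ≤ ENNReal.ofReal (Real.exp (-c0 * b n)) + ENNReal.ofReal (Real.exp (-c0 * b n)) := by
            gcongr
            · exact hch1.trans (ENNReal.ofReal_le_ofReal (hb1.trans hone))
            · exact hch2.trans (ENNReal.ofReal_le_ofReal (hb2.trans htwo))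
        _ = ENNReal.ofReal (2 * Real.exp (-c0 * b n)) := by
            rw [← ENNReal.ofReal_add (Real.exp_nonneg _) (Real.exp_nonneg _)]; ring_nf
    set g : ℕ → ℝ := fun n => if N ≤ n then 2 * Real.exp (-c0 * b n) else 1 with hgdef
    have hgnonneg : ∀ n, 0 ≤ g n := fun n => by
      simp only [hgdef]; split_ifs <;> positivity
    have hg : Summable g := by
      rw [← summable_nat_add_iff N]
      refine ((hsum c0 hc0).mul_left 2).comp_injective (add_left_injective N) |>.congr ?_
      intro n
      simp [hgdef, Nat.le_add_left]
    have htsum : (∑' n, P {ω | ε ≤ |(ξ n ω - r n) / b n|}) ≠ ⊤ := by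
      have hle : (∑' n, P {ω | ε ≤ |(ξ n ω - r n) / b n|})
          ≤ ∑' n, ENNReal.ofReal (g n) := by
        refine ENNReal.tsum_le_tsum (fun n => ?_)
        by_cases hn : N ≤ n
        · simpa [hgdef, hn] using hbound n hn
        · simp only [hgdef, hn, if_false, ENNReal.ofReal_one]
          exact prob_le_one
      refine ne_top_of_le_ne_top ?_ hle
      rw [← ENNReal.ofReal_tsum_of_nonneg hgnonneg hg]
      exact ENNReal.ofReal_ne_top
    filter_upwards [ae_eventually_notMem htsum] with ω hω
    exact hω.mono fun n h => not_le.1 h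
  have main := ae_all_iff.2 fun k : ℕ => key (1/((k:ℝ)+1)) (by positivity)
  filter_upwards [main] with ω hω
  rw [NormedAddCommGroup.tendsto_nhds_zero]
  intro ε hε
  obtain ⟨k, hk⟩ := exists_nat_one_div_lt hε
  exact (hω k).mono fun n h => by rw [Real.norm_eq_abs]; exact h.trans hk
end
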